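/- Let f, g : [a,b] → ℝ be continuous and positive, let p > 1 with 1/p + 1/q = 1, and suppose 0 < m ≤ f(x)^p / g(x)^q ≤ M < ∞ for all x ∈ [a,b]. Then (∫_a^b f(x)^p dx)^(1/p) · (∫_a^b g(x)^q dx)^(1/q) ≤ (M/m)^(1/(pq)) · ∫_a^b f(x) g(x) dx. -/

import Mathlib

open Real intervalIntegral

theorem reverse_holder (a b p q m M : ℝ) (hab : a < b) (hp : 1 < p)
    (hpq : 1 / p + 1 / q = 1) (f g : ℝ → ℝ)
    (hfc : ContinuousOn f (Set.Icc a b)) (hgc : ContinuousOn g (Set.Icc a b))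
    (hfpos : ∀ x ∈ Set.Icc a b, 0 < f x) (hgpos : ∀ x ∈ Set.Icc a b, 0 < g x)
    (hm : 0 < m)
    (hbound : ∀ x ∈ Set.Icc a b, m ≤ f x ^ p / g x ^ q ∧ f x ^ p / g x ^ q ≤ M) :
    (∫ x in a..b, f x ^ p) ^ (1 / p) * (∫ x in a..b, g x ^ q) ^ (1 / q) ≤
      (M / m) ^ (1 / (p * q)) * ∫ x in a..b, f x * g x := by
  have hp0 : (0:ℝ) < p := lt_trans one_pos hp
  have hq0 : (0:ℝ) < q := by
    have h1 : 1 / q = 1 - 1 / p := by linarith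
    have h2 : 0 < 1 / q := by
      rw [h1]
      have : 1 / p < 1 := by rw [div_lt_one hp0]; exact hp
      linarith
    exact one_div_pos.mp h2
  have hpq1 : p - 1 = p / q := by
    field_simp at hpq ⊢; nlinarith
  have hqp1 : q - 1 = q / p := by
    field_simp at hpq ⊢; nlinarith
  have haIcc : a ∈ Set.Icc a b := Set.left_mem_Icc.mpr hab.le
  have hM0 : 0 < M := lt_of_lt_of_le hm (le_trans (hbound a haIcc).1 (hbound a haIcc).2)
  -- pointwise inequality 1 : f^p ≤ M^(1/q) * (f g)
  have key1 : ∀ x ∈ Set.Icc a b, f x ^ p ≤ M ^ (1/q) * (f x * g x) := by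
    intro x hx
    have hf := hfpos x hx
    have hg := hgpos x hx
    have hgq : 0 < g x ^ q := rpow_pos_of_pos hg q
    have h2 : f x ^ p ≤ M * g x ^ q := (div_le_iff₀ hgq).mp (hbound x hx).2
    have h3 : (f x ^ p) ^ (1/q) ≤ (M * g x ^ q) ^ (1/q) :=
      Real.rpow_le_rpow (rpow_pos_of_pos hf p).le h2 (by positivity)
    have hL : (f x ^ p) ^ (1/q) = f x ^ (p - 1) := by
      rw [← Real.rpow_mul hf.le, mul_one_div, ← hpq1]
    have hR : (M * g x ^ q) ^ (1/q) = M ^ (1/q) * g x := by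
      rw [Real.mul_rpow hM0.le hgq.le, ← Real.rpow_mul hg.le, mul_one_div,
        div_self hq0.ne', Real.rpow_one]
    rw [hL, hR] at h3
    have h4 : f x ^ (p-1) * f x ≤ (M ^ (1/q) * g x) * f x :=
      mul_le_mul_of_nonneg_right h3 hf.le
    have h5 : f x ^ (p-1) * f x = f x ^ p := by
      nth_rewrite 2 [← Real.rpow_one (f x)]
      rw [← Real.rpow_add hf]; ring_nf
    rw [h5] at h4
    linarith [h4]
  -- pointwise inequality 2 : g^q ≤ m^(-(1/p)) * (f g)
  have key2 : ∀ x ∈ Set.Icc a b, g x ^ q ≤ m ^ (-(1/p)) * (f x * g x) := by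
    intro x hx
    have hf := hfpos x hx
    have hg := hgpos x hx
    have hgq : 0 < g x ^ q := rpow_pos_of_pos hg q
    have h2 : m * g x ^ q ≤ f x ^ p := (le_div_iff₀ hgq).mp (hbound x hx).1
    have h3 : (m * g x ^ q) ^ (1/p) ≤ (f x ^ p) ^ (1/p) :=
      Real.rpow_le_rpow (by positivity) h2 (by positivity)
    have hL : (m * g x ^ q) ^ (1/p) = m ^ (1/p) * g x ^ (q - 1) := by
      rw [Real.mul_rpow hm.le hgq.le, ← Real.rpow_mul hg.le, mul_one_div, ← hqp1]
    have hR : (f x ^ p) ^ (1/p) = f x := by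
      rw [← Real.rpow_mul hf.le, mul_one_div, div_self hp0.ne', Real.rpow_one]
    rw [hL, hR] at h3
    have h4 : g x ^ (q-1) ≤ m ^ (-(1/p)) * f x := by
      rw [Real.rpow_neg hm.le]
      exact (le_inv_mul_iff₀ (rpow_pos_of_pos hm (1/p))).mpr h3
    have h5 : g x ^ (q-1) * g x ≤ (m ^ (-(1/p)) * f x) * g x :=
      mul_le_mul_of_nonneg_right h4 hg.le
    have h6 : g x ^ (q-1) * g x = g x ^ q := by
      nth_rewrite 2 [← Real.rpow_one (g x)]
      rw [← Real.rpow_add hg]; ring_nf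
    rw [h6] at h5
    linarith [h5]
  -- integrability
  have hfpI : IntervalIntegrable (fun x => f x ^ p) MeasureTheory.volume a b := by
    apply ContinuousOn.intervalIntegrable
    rw [Set.uIcc_of_le hab.le]
    exact hfc.rpow_const (fun x hx => Or.inl (hfpos x hx).ne')
  have hgqI : IntervalIntegrable (fun x => g x ^ q) MeasureTheory.volume a b := by
    apply ContinuousOn.intervalIntegrable
    rw [Set.uIcc_of_le hab.le]
    exact hgc.rpow_const (fun x hx => Or.inl (hgpos x hx).ne')
  have hfgI : IntervalIntegrable (fun x => f x * g x) MeasureTheory.volume a b := by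
    apply ContinuousOn.intervalIntegrable
    rw [Set.uIcc_of_le hab.le]
    exact hfc.mul hgc
  set A := ∫ x in a..b, f x ^ p with hA
  set B := ∫ x in a..b, g x ^ q with hB
  set I := ∫ x in a..b, f x * g x with hI
  have hIpos : 0 < I := by
    apply intervalIntegral.intervalIntegral_pos_of_pos_on hfgI _ hab
    intro x hx
    have hx' : x ∈ Set.Icc a b := Set.mem_Icc_of_Ioo hx
    exact mul_pos (hfpos x hx') (hgpos x hx')
  have hA0 : 0 ≤ A := by
    apply intervalIntegral.integral_nonneg hab.le
    intro x hx
    exact (rpow_pos_of_pos (hfpos x hx) p).le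
  have hB0 : 0 ≤ B := by
    apply intervalIntegral.integral_nonneg hab.le
    intro x hx
    exact (rpow_pos_of_pos (hgpos x hx) q).le
  have hAle : A ≤ M ^ (1/q) * I := by
    rw [hA, hI, ← intervalIntegral.integral_const_mul]
    apply intervalIntegral.integral_mono_on hab.le hfpI (hfgI.const_mul _)
    exact key1
  have hBle : B ≤ m ^ (-(1/p)) * I := by
    rw [hB, hI, ← intervalIntegral.integral_const_mul]
    apply intervalIntegral.integral_mono_on hab.le hgqI (hfgI.const_mul _)
    exact key2
  -- combine
  have h1 : A ^ (1/p) ≤ M ^ (1/(p*q)) * I ^ (1/p) := by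
    calc A ^ (1/p) ≤ (M ^ (1/q) * I) ^ (1/p) :=
          Real.rpow_le_rpow hA0 hAle (by positivity)
      _ = M ^ (1/(p*q)) * I ^ (1/p) := by
          rw [Real.mul_rpow (by positivity) hIpos.le, ← Real.rpow_mul hM0.le]
          congr 2
          field_simp
  have h2 : B ^ (1/q) ≤ m ^ (-(1/(p*q))) * I ^ (1/q) := by
    calc B ^ (1/q) ≤ (m ^ (-(1/p)) * I) ^ (1/q) :=
          Real.rpow_le_rpow hB0 hBle (by positivity)
      _ = m ^ (-(1/(p*q))) * I ^ (1/q) := by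
          rw [Real.mul_rpow (by positivity) hIpos.le, ← Real.rpow_mul hm.le]
          congr 2
          field_simp
  calc A ^ (1/p) * B ^ (1/q)
      ≤ (M ^ (1/(p*q)) * I ^ (1/p)) * (m ^ (-(1/(p*q))) * I ^ (1/q)) := by
        exact mul_le_mul h1 h2 (Real.rpow_nonneg hB0 _)
          (mul_nonneg (Real.rpow_nonneg hM0.le _) (Real.rpow_nonneg hIpos.le _))
    _ = (M ^ (1/(p*q)) * m ^ (-(1/(p*q)))) * (I ^ (1/p) * I ^ (1/q)) := by ring
    _ = (M / m) ^ (1/(p*q)) * I := by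
        rw [Real.rpow_neg hm.le, ← div_eq_mul_inv, ← Real.div_rpow hM0.le hm.le,
          ← Real.rpow_add hIpos, hpq, Real.rpow_one]
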